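/- Let k be a field, P an fs monoid, 𝔭 a prime ideal of P. Then the localization of k[P]/(𝔭) at the multiplicative set generated by the image of P∖𝔭 is isomorphic as a k-algebra to the group algebra k[(P∖𝔭)^gp]. -/

import Mathlib

open AddMonoidAlgebra

section Aux
variable (k : Type*) [Field k] {G : Type*} [AddCommGroup G] (P F : AddSubmonoid G)

open Classical in
noncomputable def faceFun : ↥P → AddMonoidAlgebra k ↥(AddSubgroup.closure (F : Set G)) :=
  fun p => if h : (p : G) ∈ F then
    AddMonoidAlgebra.single ⟨(p : G), AddSubgroup.subset_closure h⟩ 1 else 0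

variable {P F}

theorem faceFun_zero : faceFun k P F 0 = 1 := by
  simp only [faceFun]
  rw [dif_pos (show ((0 : ↥P) : G) ∈ F by simpa using F.zero_mem),
    AddMonoidAlgebra.one_def]
  congr 1

theorem faceFun_add (hface : ∀ a ∈ P, ∀ b ∈ P, a + b ∈ F → a ∈ F ∧ b ∈ F) (p q : ↥P) :
    faceFun k P F (p + q) = faceFun k P F p * faceFun k P F q := by
  by_cases h : ((p + q : ↥P) : G) ∈ F
  · have hpq : (p : G) ∈ F ∧ (q : G) ∈ F := hface _ p.2 _ q.2 (by simpa using h)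
    simp only [faceFun]
    rw [dif_pos h, dif_pos hpq.1, dif_pos hpq.2,
      AddMonoidAlgebra.single_mul_single, one_mul]
    congr 1
  · simp only [faceFun]
    rw [dif_neg h]
    by_cases hp : (p : G) ∈ F
    · have hq : (q : G) ∉ F := fun hq => h (by simpa using F.add_mem hp hq)
      rw [dif_neg hq, mul_zero]
    · rw [dif_neg hp, zero_mul]

/-- elements of the subgroup closure of a submonoid are differences -/
theorem mem_closure_sub {g : G} (hg : g ∈ AddSubgroup.closure (F : Set G)) :
    ∃ a ∈ F, ∃ b ∈ F, g = a - b := by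
  have h : AddSubgroup.closure (F : Set G) ≤
      { carrier := {g | ∃ a ∈ F, ∃ b ∈ F, g = a - b}
        zero_mem' := ⟨0, F.zero_mem, 0, F.zero_mem, by simp⟩
        add_mem' := by
          rintro x y ⟨a, ha, b, hb, rfl⟩ ⟨c, hc, d, hd, rfl⟩
          exact ⟨a + c, F.add_mem ha hc, b + d, F.add_mem hb hd, by abel⟩
        neg_mem' := by
          rintro x ⟨a, ha, b, hb, rfl⟩
          exact ⟨b, hb, a, ha, by abel⟩ } :=
    AddSubgroup.closure_le _ |>.mpr fun x hx => ⟨x, hx, 0, F.zero_mem, by simp⟩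
  exact h hg

end Aux

set_option maxHeartbeats 1000000 in
theorem localization_of_quotient_is_group_algebra
    {k : Type*} [Field k]
    {G : Type*} [AddCommGroup G] (P F : AddSubmonoid G)
    (hgen : AddSubgroup.closure (P : Set G) = ⊤)
    (hfg : ∃ S : Finset G, AddSubmonoid.closure (S : Set G) = P)
    (hsat : ∀ g : G, ∀ n : ℕ, 0 < n → n • g ∈ P → g ∈ P)
    -- F = P∖𝔭 is a face of P
    (hFP : F ≤ P)
    (hface : ∀ a ∈ P, ∀ b ∈ P, a + b ∈ F → a ∈ F ∧ b ∈ F)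
    -- the ideal (𝔭) of k[P] generated by the monomials with exponent in 𝔭 = P ∖ F
    (I : Ideal (AddMonoidAlgebra k P))
    (hI : I = Ideal.span {f : AddMonoidAlgebra k P |
      ∃ p : P, (p : G) ∉ F ∧ f = AddMonoidAlgebra.single p 1})
    -- the multiplicative set generated by the images of the monomials of F = P∖𝔭
    (S : Submonoid (AddMonoidAlgebra k P ⧸ I))
    (hS : S = Submonoid.closure
      ((fun p : P => Ideal.Quotient.mk I (AddMonoidAlgebra.single p 1)) ''
        {p : P | (p : G) ∈ F})) :
    Nonempty ((Localization S) ≃ₐ[k]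
      AddMonoidAlgebra k (AddSubgroup.closure (F : Set G))) := by
  classical
  set Fgp := AddSubgroup.closure (F : Set G) with hFgp
  set A := AddMonoidAlgebra k ↥Fgp with hA
  set R := AddMonoidAlgebra k ↥P with hR
  -- the monoid hom
  set d : Multiplicative ↥P →* A :=
    { toFun := fun p => faceFun k P F p.toAdd
      map_one' := faceFun_zero k
      map_mul' := fun p q => faceFun_add k hface p.toAdd q.toAdd } with hd
  set θ : R →ₐ[k] A := AddMonoidAlgebra.lift k A ↥P d with hθ
  have θ_single : ∀ (p : ↥P) (c : k), θ (AddMonoidAlgebra.single p c) = c • faceFun k P F p := by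
    intro p c
    rw [hθ, AddMonoidAlgebra.lift_single]
    rfl
  have θ_single_mem : ∀ (p : ↥P) (c : k) (h : (p : G) ∈ F),
      θ (AddMonoidAlgebra.single p c) =
        AddMonoidAlgebra.single (⟨(p : G), AddSubgroup.subset_closure h⟩ : ↥Fgp) c := by
    intro p c h
    rw [θ_single]
    simp only [faceFun]
    rw [dif_pos h, AddMonoidAlgebra.smul_single, smul_eq_mul, mul_one]
  have θ_single_not : ∀ (p : ↥P) (c : k), (p : G) ∉ F →
      θ (AddMonoidAlgebra.single p c) = 0 := by
    intro p c h
    rw [θ_single]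
    simp only [faceFun]
    rw [dif_neg h, smul_zero]
  -- membership in I
  have hJ : ∀ f : R, (∀ p ∈ f.coeff.support, (p : G) ∉ F) → f ∈ I := by
    intro f hf
    have hrepr : f = ∑ p ∈ f.coeff.support,
        AddMonoidAlgebra.single (0 : ↥P) (f.coeff p) * AddMonoidAlgebra.single p 1 := by
      conv_lhs => rw [← AddMonoidAlgebra.sum_coeff_single f]
      rw [Finsupp.sum]
      refine Finset.sum_congr rfl fun p _ => ?_
      rw [AddMonoidAlgebra.single_mul_single, zero_add, mul_one]
    rw [hrepr, hI]
    exact Submodule.sum_mem _ fun p hp =>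
      Ideal.mul_mem_left _ _ (Ideal.subset_span ⟨p, hf p hp, rfl⟩)
  -- kernel of θ
  have hker : ∀ f : R, θ f = 0 → f ∈ I := by
    intro f hf
    refine hJ f fun p₀ hp₀ hFp₀ => ?_
    have hg : (p₀ : G) ∈ Fgp := AddSubgroup.subset_closure hFp₀
    set g₀ : ↥Fgp := ⟨(p₀ : G), hg⟩ with hg₀
    have h1 : (θ f).coeff g₀ = f.coeff p₀ := by
      rw [hθ, AddMonoidAlgebra.lift_apply, AddMonoidAlgebra.coeff_finsuppSum, Finsupp.sum_apply, Finsupp.sum,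
        Finset.sum_eq_single p₀]
      · have hd1 : d (Multiplicative.ofAdd p₀) = AddMonoidAlgebra.single g₀ 1 := by
          show faceFun k P F p₀ = _
          simp only [faceFun]
          rw [dif_pos hFp₀]
        rw [hd1, AddMonoidAlgebra.smul_single, AddMonoidAlgebra.coeff_single, Finsupp.single_eq_same, smul_eq_mul, mul_one]
      · intro p hp hne
        by_cases h : (p : G) ∈ F
        · have hd1 : d (Multiplicative.ofAdd p) =
              AddMonoidAlgebra.single (⟨(p : G), AddSubgroup.subset_closure h⟩ : ↥Fgp) 1 := by
            show faceFun k P F p = _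
            simp only [faceFun]
            rw [dif_pos h]
          have hne' : (⟨(p : G), AddSubgroup.subset_closure h⟩ : ↥Fgp) ≠ g₀ := fun hc =>
            hne (Subtype.ext (congrArg (Subtype.val : ↥Fgp → G) hc))
          rw [hd1, AddMonoidAlgebra.smul_single, AddMonoidAlgebra.coeff_single, smul_eq_mul, mul_one, Finsupp.single_apply,
            if_neg hne']
        · have hd1 : d (Multiplicative.ofAdd p) = 0 := by
            show faceFun k P F p = _
            simp only [faceFun]
            rw [dif_neg h]
          rw [hd1, smul_zero, AddMonoidAlgebra.coeff_zero, Finsupp.coe_zero, Pi.zero_apply]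
      · intro hp
        rw [Finsupp.notMem_support_iff.mp hp, zero_smul, AddMonoidAlgebra.coeff_zero, Finsupp.coe_zero, Pi.zero_apply]
    have h2 : f.coeff p₀ = 0 := by
      rw [← h1, hf]
      rfl
    exact Finsupp.mem_support_iff.mp hp₀ h2
  have hIker : ∀ f ∈ I, θ f = 0 := by
    intro f hf
    rw [hI] at hf
    refine Submodule.span_induction ?_ ?_ ?_ ?_ hf
    · rintro x ⟨p, hp, rfl⟩
      exact θ_single_not p 1 hp
    · exact map_zero θ
    · intro x y _ _ hx hy
      rw [map_add, hx, hy, add_zero]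
    · intro c x _ hx
      rw [smul_eq_mul, map_mul, hx, mul_zero]
  -- descend
  set θ' : (R ⧸ I) →ₐ[k] A := Ideal.Quotient.liftₐ I θ hIker with hθ'
  have θ'_mk : ∀ f : R, θ' (Ideal.Quotient.mk I f) = θ f := fun f =>
    Ideal.Quotient.liftₐ_apply I θ hIker _
  have hinj : Function.Injective θ' := by
    intro x y hxy
    obtain ⟨f, rfl⟩ := Ideal.Quotient.mk_surjective x
    obtain ⟨g, rfl⟩ := Ideal.Quotient.mk_surjective y
    rw [θ'_mk, θ'_mk] at hxy
    rw [Ideal.Quotient.eq]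
    exact hker _ (by rw [map_sub, hxy, sub_self])
  letI alg : Algebra (R ⧸ I) A := θ'.toRingHom.toAlgebra
  have halg : ∀ x, algebraMap (R ⧸ I) A x = θ' x := fun _ => rfl
  -- units in the group algebra
  have hunit : ∀ x : ↥Fgp, IsUnit (AddMonoidAlgebra.single x (1 : k) : A) := by
    intro x
    refine IsUnit.of_mul_eq_one (AddMonoidAlgebra.single (-x) 1) ?_
    rw [AddMonoidAlgebra.single_mul_single, add_neg_cancel, one_mul,
      ← AddMonoidAlgebra.one_def]
  -- map_units
  have hmu : ∀ s : S, IsUnit (algebraMap (R ⧸ I) A s) := by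
    rintro ⟨s, hs⟩
    rw [hS] at hs
    simp only [halg]
    refine Submonoid.closure_induction ?_ ?_ ?_ hs
    · rintro x ⟨p, hp, rfl⟩
      rw [θ'_mk, θ_single_mem p 1 hp]
      exact hunit _
    · rw [map_one]; exact isUnit_one
    · intro x y _ _ hx hy
      rw [map_mul]; exact hx.mul hy
  -- surjectivity up to denominators
  have hclaim : ∀ z : A, ∃ (x : R) (p : ↥P), (p : G) ∈ F ∧
      z * θ (AddMonoidAlgebra.single p 1) = θ x := by
    intro z
    refine AddMonoidAlgebra.induction z ⟨0, 0, by simpa using F.zero_mem, by simp⟩ ?_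
    rintro g c f hgf hc ⟨x, s, hsF, hx⟩
    obtain ⟨a, ha, b, hb, hab⟩ := mem_closure_sub g.2
    set pa : ↥P := ⟨a, hFP ha⟩ with hpa
    set pb : ↥P := ⟨b, hFP hb⟩ with hpb
    have hbs : ((pb + s : ↥P) : G) ∈ F := F.add_mem hb hsF
    have has : ((pa + s : ↥P) : G) ∈ F := F.add_mem ha hsF
    refine ⟨AddMonoidAlgebra.single (pa + s) c + x * AddMonoidAlgebra.single pb 1,
      pb + s, hbs, ?_⟩
    set gb : ↥Fgp := ⟨(pb : G), AddSubgroup.subset_closure hb⟩ with hgb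
    set gs : ↥Fgp := ⟨(s : G), AddSubgroup.subset_closure hsF⟩ with hgs
    set ga : ↥Fgp := ⟨(pa : G), AddSubgroup.subset_closure ha⟩ with hga
    rw [θ_single_mem _ 1 hbs, map_add, map_mul, θ_single_mem _ c has,
      θ_single_mem _ 1 hb]
    have hsplit : (AddMonoidAlgebra.single
          (⟨((pb + s : ↥P) : G), AddSubgroup.subset_closure hbs⟩ : ↥Fgp) (1 : k) : A)
        = AddMonoidAlgebra.single gb 1 * AddMonoidAlgebra.single gs 1 := by
      rw [AddMonoidAlgebra.single_mul_single, one_mul]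
      congr 1
    have h1 : (AddMonoidAlgebra.single g c : A) * AddMonoidAlgebra.single gb 1
        = AddMonoidAlgebra.single ga c := by
      rw [AddMonoidAlgebra.single_mul_single, mul_one]
      congr 1
      ext
      show (g : G) + (pb : G) = (pa : G)
      rw [hab]
      show a - b + b = a
      abel
    have h2 : (AddMonoidAlgebra.single ga c : A) * AddMonoidAlgebra.single gs 1
        = AddMonoidAlgebra.single
            (⟨((pa + s : ↥P) : G), AddSubgroup.subset_closure has⟩ : ↥Fgp) c := by
      rw [AddMonoidAlgebra.single_mul_single, mul_one]
      congr 1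
    rw [θ_single_mem s 1 hsF] at hx
    rw [hsplit, ← h2, ← hx, ← h1]
    ring
  have hsurj : ∀ z : A, ∃ x : (R ⧸ I) × S,
      z * algebraMap (R ⧸ I) A x.2 = algebraMap (R ⧸ I) A x.1 := by
    intro z
    obtain ⟨x, p, hpF, hx⟩ := hclaim z
    refine ⟨⟨Ideal.Quotient.mk I x, ⟨Ideal.Quotient.mk I (AddMonoidAlgebra.single p 1),
      hS ▸ Submonoid.subset_closure ⟨p, hpF, rfl⟩⟩⟩, ?_⟩
    simp only [halg, θ'_mk]
    exact hx
  have heq : ∀ x y : R ⧸ I, algebraMap (R ⧸ I) A x = algebraMap (R ⧸ I) A y →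
      ∃ c : S, ↑c * x = ↑c * y := by
    intro x y hxy
    have hxy' : x = y := hinj (by simpa only [halg] using hxy)
    exact ⟨1, by rw [hxy']⟩
  haveI : IsLocalization S A := ⟨hmu, hsurj, fun {x y} h => heq x y h⟩
  set e₀ : Localization S ≃ₐ[R ⧸ I] A := IsLocalization.algEquiv S (Localization S) A with he₀
  refine ⟨AlgEquiv.ofRingEquiv (f := e₀.toRingEquiv) fun c => ?_⟩
  show e₀ (algebraMap k (Localization S) c) = algebraMap k A c
  rw [IsScalarTower.algebraMap_apply k (R ⧸ I) (Localization S), AlgEquiv.commutes,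
    halg, AlgHom.commutes]
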